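/- Let C be a category of noncrossing colored partitions, let β_k = θ_k*θ_k (two horizontal blocks of k white points each, with β_{-k} the all-black version and β_0 the empty partition), and set J(C) = {k ∈ ℤ : β_k ∈ C}. If I(C) = ℤ \ {0} (π_k ∈ C for all k ≠ 0), then J(C) is an additive subgroup of ℤ, hence J(C) = nℤ for some n ≥ 0. -/

import Mathlib

open scoped Classical

/-- A two-colored partition with `k` upper and `l` lower points; `true` = white. -/
structure CPartition where
  k : ℕ
  l : ℕ
  uc : Fin k → Bool
  lc : Fin l → Bool
  rel : Setoid (Fin k ⊕ Fin l)

namespace CPartition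

/-- The disjoint union of two setoids. -/
def sumSetoid {X Y : Type*} (p : Setoid X) (q : Setoid Y) : Setoid (X ⊕ Y) where
  r := Sum.LiftRel p.r q.r
  iseqv := by
    refine ⟨fun x => ?_, fun h => ?_, fun h h' => ?_⟩
    · cases x with
      | inl a => exact Sum.LiftRel.inl (p.iseqv.refl a)
      | inr b => exact Sum.LiftRel.inr (q.iseqv.refl b)
    · cases h with
      | inl h => exact Sum.LiftRel.inl (p.iseqv.symm h)
      | inr h => exact Sum.LiftRel.inr (q.iseqv.symm h)
    · cases h with
      | inl h =>
        cases h' with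
        | inl h' => exact Sum.LiftRel.inl (p.iseqv.trans h h')
      | inr h =>
        cases h' with
        | inr h' => exact Sum.LiftRel.inr (q.iseqv.trans h h')

/-- Horizontal concatenation `p ⊗ q`. -/
def tensor (p q : CPartition) : CPartition where
  k := p.k + q.k
  l := p.l + q.l
  uc := fun i => Sum.elim p.uc q.uc (finSumFinEquiv.symm i)
  lc := fun j => Sum.elim p.lc q.lc (finSumFinEquiv.symm j)
  rel := Setoid.comap
    (fun x => Equiv.sumSumSumComm (Fin p.k) (Fin q.k) (Fin p.l) (Fin q.l)
      (Sum.map (fun i => finSumFinEquiv.symm i) (fun j => finSumFinEquiv.symm j) x))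
    (sumSetoid p.rel q.rel)

/-- Reflection `p*` (exchange the two rows, keeping colors). -/
def reflect (p : CPartition) : CPartition where
  k := p.l
  l := p.k
  uc := p.lc
  lc := p.uc
  rel := Setoid.comap Sum.swap p.rel

/-- The conjugate partition `p̄` : rotate all upper points to the lower row and
conversely (order is reversed and colors are switched). -/
def conj (p : CPartition) : CPartition where
  k := p.l
  l := p.k
  uc := fun i => !(p.lc i.rev)
  lc := fun j => !(p.uc j.rev)
  rel := Setoid.comap
    (Sum.elim (fun i => Sum.inr i.rev) (fun j => Sum.inl j.rev)) p.rel

/-- Vertical concatenation: `p` on top, then `q` below (requires `p.l = q.k`).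
Points of the middle row are identified and removed, blocks being joined along them. -/
def vcomp (p q : CPartition) (h : p.l = q.k) : CPartition where
  k := p.k
  l := q.l
  uc := p.uc
  lc := q.lc
  rel := Setoid.comap (Sum.map id Sum.inr)
    (Relation.EqvGen.setoid (fun x y : Fin p.k ⊕ (Fin p.l ⊕ Fin q.l) =>
      (∃ a b, p.rel.r a b ∧ Sum.map id Sum.inl a = x ∧ Sum.map id Sum.inl b = y) ∨
      (∃ a b, q.rel.r a b ∧
        Sum.inr (Sum.map (Fin.cast h.symm) id a) = x ∧
        Sum.inr (Sum.map (Fin.cast h.symm) id b) = y)))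

/-- Rotation: move the leftmost upper point to the leftmost lower position,
switching its color. -/
def rotDown (p : CPartition) (m : ℕ) (h : p.k = m + 1) : CPartition where
  k := m
  l := p.l + 1
  uc := fun i => p.uc (Fin.cast h.symm i.succ)
  lc := fun j => Fin.cases (!(p.uc (Fin.cast h.symm 0))) p.lc j
  rel := Setoid.comap
    (Sum.elim (fun i => Sum.inl (Fin.cast h.symm i.succ))
      (fun j => Fin.cases (Sum.inl (Fin.cast h.symm (0 : Fin (m + 1))))
        (fun j' => Sum.inr j') j)) p.rel

/-- Rotation: move the leftmost lower point to the leftmost upper position,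
switching its color. -/
def rotUp (p : CPartition) (m : ℕ) (h : p.l = m + 1) : CPartition where
  k := p.k + 1
  l := m
  uc := fun i => Fin.cases (!(p.lc (Fin.cast h.symm 0))) p.uc i
  lc := fun j => p.lc (Fin.cast h.symm j.succ)
  rel := Setoid.comap
    (Sum.elim (fun i => Fin.cases (Sum.inr (Fin.cast h.symm (0 : Fin (m + 1))))
        (fun i' => Sum.inl i') i)
      (fun j => Sum.inr (Fin.cast h.symm j.succ))) p.rel

/-- The identity partition with coloring `c`. -/
def idPart {n : ℕ} (c : Fin n → Bool) : CPartition where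
  k := n
  l := n
  uc := c
  lc := c
  rel := Setoid.ker (Sum.elim id id)

/-- A block (class) of `p` is a through-block when it contains both an upper
and a lower point. -/
def IsThrough (p : CPartition) (c : Quotient p.rel) : Prop :=
  (∃ i : Fin p.k, Quotient.mk p.rel (Sum.inl i) = c) ∧
    (∃ j : Fin p.l, Quotient.mk p.rel (Sum.inr j) = c)

/-- The number `t(p)` of through-blocks of `p`. -/
noncomputable def t (p : CPartition) : ℕ := Nat.card {c : Quotient p.rel // p.IsThrough c}

/-- A projective partition: `pp = p = p*`. -/
def IsProjective (p : CPartition) : Prop :=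
  ∃ h : p.l = p.k, vcomp p p h = p ∧ reflect p = p

/-- Equivalence of projective partitions in `C` : `p ∼ q` iff `r*r = p`, `rr* = q`
for some `r ∈ C`. -/
def EquivIn (C : Set CPartition) (p q : CPartition) : Prop :=
  ∃ r ∈ C, vcomp r (reflect r) rfl = p ∧ vcomp (reflect r) r rfl = q

/-- Position of a point in the counterclockwise planar order. -/
def ptIdx (p : CPartition) : Fin p.k ⊕ Fin p.l → ℕ :=
  Sum.elim (fun i => (i : ℕ)) (fun j => p.k + (p.l - 1 - (j : ℕ)))

/-- A partition is noncrossing when its strings can be drawn without crossings. -/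
def NonCrossing (p : CPartition) : Prop :=
  ∀ a b c d : Fin p.k ⊕ Fin p.l,
    p.ptIdx a < p.ptIdx b → p.ptIdx b < p.ptIdx c → p.ptIdx c < p.ptIdx d →
    p.rel.r a c → p.rel.r b d → p.rel.r a b

/-- The one-block projective partition on `k + k` points, all colored `c`. -/
def piP (k : ℕ) (c : Bool) : CPartition :=
  ⟨k, k, fun _ => c, fun _ => c, ⊤⟩

/-- `π_k` for `k ∈ ℤ \ {0}` : one block, `|k| + |k|` points, white if `k > 0`,
black if `k < 0`. -/
def piZ (k : ℤ) : CPartition := piP k.natAbs (decide (0 < k))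

/-- `π_{0⁺}`, the one-block projective partition with rows colored white–black. -/
def pi0plus : CPartition :=
  ⟨2, 2, ![true, false], ![true, false], ⊤⟩

/-- `θ_k` : one block of `k` points of color `c` on one row. -/
def thetaP (k : ℕ) (c : Bool) : CPartition :=
  ⟨k, 0, fun _ => c, Fin.elim0, ⊤⟩

/-- `β_k = θ_k* θ_k` : one upper block and one lower block of `k` points each,
all of color `c`. -/
def betaP (k : ℕ) (c : Bool) : CPartition :=
  ⟨k, k, fun _ => c, fun _ => c, sumSetoid ⊤ ⊤⟩

/-- `β_k` for `k : ℤ` (white if `k > 0`, black if `k < 0`, empty if `k = 0`). -/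
def betaZ (k : ℤ) : CPartition := betaP k.natAbs (decide (0 < k))

/-- Tensor powers, `tpow p 0` being the empty partition. -/
def tpow (p : CPartition) : ℕ → CPartition
  | 0 => betaP 0 true
  | m + 1 => tensor (tpow p m) p

end CPartition

open CPartition

/-- A category of two-colored partitions: a class of partitions containing the
white identity and stable under horizontal concatenation, vertical concatenation
(when the colorings match), reflection and rotations. -/
structure PartitionCategory where
  mem : Set CPartition
  id_mem : idPart (fun _ : Fin 1 => true) ∈ mem
  tensor_mem : ∀ p q, p ∈ mem → q ∈ mem → tensor p q ∈ mem
  vcomp_mem : ∀ p q (h : p.l = q.k), p ∈ mem → q ∈ mem →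
    (∀ j, p.lc j = q.uc (Fin.cast h j)) → vcomp p q h ∈ mem
  reflect_mem : ∀ p, p ∈ mem → reflect p ∈ mem
  rotDown_mem : ∀ p, p ∈ mem → ∀ m (h : p.k = m + 1), rotDown p m h ∈ mem
  rotUp_mem : ∀ p, p ∈ mem → ∀ m (h : p.l = m + 1), rotUp p m h ∈ mem

section Infra

namespace CPartition

lemma mk_eq {k l : ℕ} {u1 u2 : Fin k → Bool} {l1 l2 : Fin l → Bool}
    {r1 r2 : Setoid (Fin k ⊕ Fin l)}
    (hu : u1 = u2) (hl : l1 = l2) (hr : r1 = r2) :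
    CPartition.mk k l u1 l1 r1 = CPartition.mk k l u2 l2 r2 := by
  subst hu hl hr; rfl

lemma setoid_comap_ker {α β γ : Type*} (f : α → β) (g : β → γ) :
    Setoid.comap f (Setoid.ker g) = Setoid.ker (fun x => g (f x)) := rfl

lemma elim_fse {a b : ℕ} {β : Sort*} (f : Fin a → β) (g : Fin b → β) (j : Fin (a + b)) :
    Sum.elim f g (finSumFinEquiv.symm j) =
      if h : (j : ℕ) < a then f ⟨j, h⟩ else g ⟨(j : ℕ) - a, by omega⟩ := by
  induction j using Fin.addCases with
  | left i => simp
  | right i =>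
    rw [finSumFinEquiv_symm_apply_natAdd, dif_neg (by simp)]
    simp only [Sum.elim_inr]; congr 1; ext; simp

lemma fse_symm_eq {a b : ℕ} (j : Fin (a + b)) :
    finSumFinEquiv.symm j =
      if h : (j : ℕ) < a then Sum.inl ⟨j, h⟩ else Sum.inr ⟨(j : ℕ) - a, by omega⟩ := by
  have := elim_fse (Sum.inl : Fin a → Fin a ⊕ Fin b) Sum.inr j
  simpa using this

lemma fse_symm_inl {a b : ℕ} {j : Fin (a + b)} {u : Fin a}
    (h : finSumFinEquiv.symm j = Sum.inl u) : (u : ℕ) = (j : ℕ) ∧ (j : ℕ) < a := by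
  have h2 := congrArg finSumFinEquiv h
  simp only [Equiv.apply_symm_apply, finSumFinEquiv_apply_left] at h2
  subst h2
  exact ⟨rfl, u.isLt⟩

lemma fse_symm_inr {a b : ℕ} {j : Fin (a + b)} {u : Fin b}
    (h : finSumFinEquiv.symm j = Sum.inr u) : (j : ℕ) = a + (u : ℕ) := by
  have h2 := congrArg finSumFinEquiv h
  simp only [Equiv.apply_symm_apply, finSumFinEquiv_apply_right] at h2
  subst h2
  rfl

@[simp] lemma ssc1 {A B C D : Type*} (x : A) :
    Equiv.sumSumSumComm A B C D (Sum.inl (Sum.inl x)) = Sum.inl (Sum.inl x) := rfl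
@[simp] lemma ssc2 {A B C D : Type*} (x : B) :
    Equiv.sumSumSumComm A B C D (Sum.inl (Sum.inr x)) = Sum.inr (Sum.inl x) := rfl
@[simp] lemma ssc3 {A B C D : Type*} (x : C) :
    Equiv.sumSumSumComm A B C D (Sum.inr (Sum.inl x)) = Sum.inl (Sum.inr x) := rfl
@[simp] lemma ssc4 {A B C D : Type*} (x : D) :
    Equiv.sumSumSumComm A B C D (Sum.inr (Sum.inr x)) = Sum.inr (Sum.inr x) := rfl

lemma tensor_uc (p q : CPartition) (i : Fin (p.k + q.k)) :
    (tensor p q).uc i = Sum.elim p.uc q.uc (finSumFinEquiv.symm i) := rfl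

lemma tensor_lc (p q : CPartition) (j : Fin (p.l + q.l)) :
    (tensor p q).lc j = Sum.elim p.lc q.lc (finSumFinEquiv.symm j) := rfl

lemma tensor_rel_iff (p q : CPartition) (x y : Fin (p.k + q.k) ⊕ Fin (p.l + q.l)) :
    (tensor p q).rel.r x y ↔
      Sum.LiftRel p.rel.r q.rel.r
        (Equiv.sumSumSumComm (Fin p.k) (Fin q.k) (Fin p.l) (Fin q.l)
          (Sum.map (fun i => finSumFinEquiv.symm i) (fun j => finSumFinEquiv.symm j) x))
        (Equiv.sumSumSumComm (Fin p.k) (Fin q.k) (Fin p.l) (Fin q.l)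
          (Sum.map (fun i => finSumFinEquiv.symm i) (fun j => finSumFinEquiv.symm j) y)) :=
  Iff.rfl

lemma vcomp_rel_iff (p q : CPartition) (h : p.l = q.k) (x y : Fin p.k ⊕ Fin q.l) :
    (vcomp p q h).rel.r x y ↔ Relation.EqvGen
      (fun x y : Fin p.k ⊕ (Fin p.l ⊕ Fin q.l) =>
        (∃ a b, p.rel.r a b ∧ Sum.map id Sum.inl a = x ∧ Sum.map id Sum.inl b = y) ∨
        (∃ a b, q.rel.r a b ∧
          Sum.inr (Sum.map (Fin.cast h.symm) id a) = x ∧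
          Sum.inr (Sum.map (Fin.cast h.symm) id b) = y))
      (Sum.map id Sum.inr x) (Sum.map id Sum.inr y) :=
  Iff.rfl

lemma eqvGen_invariant {α : Type*} {β : Type*} {r : α → α → Prop} {f : α → β}
    (hr : ∀ x y, r x y → f x = f y) : ∀ x y, Relation.EqvGen r x y → f x = f y := by
  intro x y h
  induction h with
  | rel _ _ h => exact hr _ _ h
  | refl => rfl
  | symm _ _ _ ih => exact ih.symm
  | trans _ _ _ _ _ ih1 ih2 => exact ih1.trans ih2

/-- `p` has no through-block (at the level of the relation). -/
def NoThru (p : CPartition) : Prop :=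
  ∀ (i : Fin p.k) (j : Fin p.l), ¬ p.rel.r (Sum.inl i) (Sum.inr j)

lemma betaP_noThru (n : ℕ) (c : Bool) : NoThru (betaP n c) := by
  intro i j h
  cases h

lemma tensor_noThru {p q : CPartition} (hp : NoThru p) (hq : NoThru q) :
    NoThru (tensor p q) := by
  intro i j h
  change Fin (p.k + q.k) at i
  change Fin (p.l + q.l) at j
  have h' := (tensor_rel_iff p q (Sum.inl i) (Sum.inr j)).mp h
  rcases hi : finSumFinEquiv.symm i with u | u <;> rcases hj : finSumFinEquiv.symm j with v | v <;>
    simp only [Sum.map_inl, Sum.map_inr, hi, hj, ssc1, ssc2, ssc3, ssc4] at h'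
  · cases h' with | inl h'' => exact hp u v h''
  · cases h'
  · cases h'
  · cases h' with | inr h'' => exact hq u v h''

lemma vcomp_one (p q : CPartition) (h : p.l = q.k)
    (hone : ∀ i i', p.rel.r (Sum.inl i) (Sum.inl i')) :
    ∀ i i', (vcomp p q h).rel.r (Sum.inl i) (Sum.inl i') := by
  intro i i'
  exact (vcomp_rel_iff p q h (Sum.inl i) (Sum.inl i')).mpr
    (Relation.EqvGen.rel _ _ (Or.inl ⟨Sum.inl i, Sum.inl i', hone i i', rfl, rfl⟩))

lemma vcomp_noThru (p q : CPartition) (h : p.l = q.k) (hq : NoThru q) :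
    NoThru (vcomp p q h) := by
  intro i j hx
  change Fin p.k at i
  change Fin q.l at j
  have hx' := (vcomp_rel_iff p q h (Sum.inl i) (Sum.inr j)).mp hx
  have inv := eqvGen_invariant
    (f := fun x : Fin p.k ⊕ (Fin p.l ⊕ Fin q.l) =>
      Sum.elim (fun _ => true) (Sum.elim (fun _ => true) (fun _ => false)) x)
    ?_ _ _ hx'
  · simp at inv
  · rintro u v (⟨a, b, hab, rfl, rfl⟩ | ⟨a, b, hab, rfl, rfl⟩)
    · cases a <;> cases b <;> rfl
    · rcases a with m | jj <;> rcases b with m' | jj'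
      · rfl
      · exact absurd hab (hq m jj')
      · exact absurd (q.rel.iseqv.symm hab) (hq m' jj)
      · rfl

end CPartition

end Infra
namespace CPartition

lemma mk_eq' {k l k' l' : ℕ} (hk : k = k') (hl : l = l')
    {u : Fin k → Bool} {v : Fin l → Bool} {r : Setoid (Fin k ⊕ Fin l)}
    {u' : Fin k' → Bool} {v' : Fin l' → Bool} {r' : Setoid (Fin k' ⊕ Fin l')}
    (hu : ∀ i, u i = u' (Fin.cast hk i))
    (hv : ∀ j, v j = v' (Fin.cast hl j))
    (hr : ∀ x y, r.r x y ↔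
      r'.r (Sum.map (Fin.cast hk) (Fin.cast hl) x) (Sum.map (Fin.cast hk) (Fin.cast hl) y)) :
    CPartition.mk k l u v r = CPartition.mk k' l' u' v' r' := by
  cases hk; cases hl
  refine mk_eq (funext fun i => hu i) (funext fun j => hv j) (Setoid.ext fun x y => ?_)
  have := hr x y
  rcases x with i | i <;> rcases y with j | j <;> exact this

end CPartition
section CatLemmas

open CPartition

/-- Master lemma: if `T ∈ C` has all upper points of color `c`, all upper points
in one block, and no through-block, then composing `T` with its reflection gives
`β` on `T.k` points. -/
lemma master (C : PartitionCategory) {T : CPartition} (hT : T ∈ C.mem) {c : Bool}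
    (hu : ∀ i, T.uc i = c)
    (hone : ∀ i i', T.rel.r (Sum.inl i) (Sum.inl i'))
    (hnt : NoThru T) : betaP T.k c ∈ C.mem := by
  have hmem : vcomp T (reflect T) rfl ∈ C.mem :=
    C.vcomp_mem _ _ rfl hT (C.reflect_mem _ hT) (fun j => rfl)
  have hrel : (vcomp T (reflect T) rfl).rel =
      (sumSetoid (⊤ : Setoid (Fin T.k)) (⊤ : Setoid (Fin T.k))) := by
    apply Setoid.ext
    intro x y
    change Fin T.k ⊕ Fin T.k at x y
    constructor
    · intro hxy
      have hxy' := (vcomp_rel_iff T (reflect T) rfl x y).mp hxy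
      have inv := eqvGen_invariant
        (f := fun x : Fin T.k ⊕ (Fin T.l ⊕ Fin T.k) =>
          Sum.elim (fun _ => (0 : ℕ)) (Sum.elim (fun _ => 1) (fun _ => 2)) x) ?_ _ _ hxy'
      · rcases x with i | i <;> rcases y with j | j
        · exact Sum.LiftRel.inl trivial
        · exact ((by decide : ¬ ((0 : ℕ) = 2)) inv).elim
        · exact ((by decide : ¬ ((2 : ℕ) = 0)) inv).elim
        · exact Sum.LiftRel.inr trivial
      · rintro u v (⟨a, b, hab, rfl, rfl⟩ | ⟨a, b, hab, rfl, rfl⟩)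
        · rcases a with i | i <;> rcases b with j | j
          · rfl
          · exact absurd hab (hnt i j)
          · exact absurd (T.rel.iseqv.symm hab) (hnt j i)
          · rfl
        · rcases a with i | i <;> rcases b with j | j
          · rfl
          · exact absurd (T.rel.iseqv.symm hab) (hnt j i)
          · exact absurd hab (hnt i j)
          · rfl
    · intro hxy
      refine (vcomp_rel_iff T (reflect T) rfl x y).mpr ?_
      rcases x with i | i <;> rcases y with j | j
      · exact Relation.EqvGen.rel _ _
          (Or.inl ⟨Sum.inl i, Sum.inl j, hone i j, rfl, rfl⟩)
      · cases hxy
      · cases hxy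
      · exact Relation.EqvGen.rel _ _
          (Or.inr ⟨Sum.inr i, Sum.inr j, hone i j, rfl, rfl⟩)
  have key : vcomp T (reflect T) rfl = betaP T.k c :=
    mk_eq (funext hu) (funext hu) hrel
  rwa [key] at hmem

lemma zero_mem (C : PartitionCategory) : betaP 0 true ∈ C.mem := by
  have h2 := C.rotDown_mem _ C.id_mem 0 rfl
  have h3 := C.reflect_mem _ h2
  have h4 := C.vcomp_mem _ _ rfl h2 h3 (fun j => rfl)
  have key : vcomp (rotDown (idPart fun _ : Fin 1 => true) 0 rfl)
      (reflect (rotDown (idPart fun _ : Fin 1 => true) 0 rfl)) rfl = betaP 0 true :=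
    mk_eq (funext fun i => i.elim0) (funext fun i => i.elim0)
      (Setoid.ext fun x _ => by rcases x with i | i <;> exact i.elim0)
  rwa [key] at h4

lemma beta_zero (c c' : Bool) : betaP 0 c = betaP 0 c' :=
  mk_eq (funext fun i => i.elim0) (funext fun i => i.elim0) rfl

/-- The fully rotated-down one-block partition: nested colored "cups". -/
lemma nest_mem (C : PartitionCategory) {m : ℕ} {d : Bool} (hm : piP m d ∈ C.mem) :
    ∀ j, j ≤ m → ∀ a b : ℕ, a + j = m → b = m + j →
      CPartition.mk a b (fun _ => d) (fun i => if (i : ℕ) < j then !d else d) ⊤ ∈ C.mem := by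
  intro j
  induction j with
  | zero =>
    intro _ a b ha hb
    have key : piP m d = CPartition.mk a b (fun _ => d)
        (fun i => if (i : ℕ) < 0 then !d else d) ⊤ :=
      mk_eq' (by omega) (by omega) (fun i => rfl)
        (fun j => (if_neg (by omega)).symm)
        (fun x y => ⟨fun _ => trivial, fun _ => trivial⟩)
    rwa [key] at hm
  | succ j ih =>
    intro hj a b ha hb
    have hP := ih (by omega) (a + 1) (m + j) (by omega) rfl
    have hmem := C.rotDown_mem _ hP a rfl
    have hlb : (m + j) + 1 = b := by omega
    have key : rotDown (CPartition.mk (a + 1) (m + j) (fun _ => d)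
        (fun i => if (i : ℕ) < j then !d else d) ⊤) a rfl
        = CPartition.mk a b (fun _ => d)
          (fun i => if (i : ℕ) < j + 1 then !d else d) ⊤ := by
      refine mk_eq' rfl hlb (fun i => rfl) (fun i => ?_)
        (fun x y => ⟨fun _ => trivial, fun _ => trivial⟩)
      induction i using Fin.cases with
      | zero =>
        rw [if_pos (show ((Fin.cast hlb (0 : Fin (m + j + 1)) : Fin b) : ℕ) < j + 1 by
          simp)]
        rfl
      | succ i' =>
        simp only [Fin.cases_succ]
        have hc : ((Fin.cast hlb i'.succ : Fin b) : ℕ) = (i' : ℕ) + 1 := by simp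
        simp only [hc]
        by_cases h1 : (i' : ℕ) < j
        · rw [if_pos h1, if_pos (by omega : (i' : ℕ) + 1 < j + 1)]
        · rw [if_neg h1, if_neg (by omega : ¬ ((i' : ℕ) + 1 < j + 1))]
    rwa [key] at hmem

/-- Addition: `β_a, β_b ∈ C` implies `β_{a+b} ∈ C`, same color. -/
lemma add_lemma (C : PartitionCategory) (a b : ℕ) (c : Bool)
    (hpi : piP (a + b) c ∈ C.mem)
    (ha : betaP a c ∈ C.mem) (hb : betaP b c ∈ C.mem) : betaP (a + b) c ∈ C.mem := by
  have hQ : tensor (betaP a c) (betaP b c) ∈ C.mem := C.tensor_mem _ _ ha hb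
  have hT : vcomp (piP (a + b) c) (tensor (betaP a c) (betaP b c)) rfl ∈ C.mem := by
    refine C.vcomp_mem _ _ rfl hpi hQ ?_
    intro j
    show c = Sum.elim (betaP a c).uc (betaP b c).uc (finSumFinEquiv.symm
      (Fin.cast (rfl : (piP (a + b) c).l = (tensor (betaP a c) (betaP b c)).k) j))
    rw [elim_fse]
    split_ifs <;> rfl
  exact master C hT (fun _ => rfl)
    (vcomp_one _ _ _ (fun i i' => trivial))
    (vcomp_noThru _ _ _ (tensor_noThru (betaP_noThru a c) (betaP_noThru b c)))

end CatLemmas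
section SubLemma

open CPartition

/-- Subtraction: `β_{b+r}` (color `c`) and `β_b` (color `!c`) give `β_r` (color `c`). -/
lemma sub_lemma (C : PartitionCategory) (r b : ℕ) (c : Bool) (hr : 1 ≤ r) (hb : 1 ≤ b)
    (hpir : piP r c ∈ C.mem) (hpib : piP b (!c) ∈ C.mem)
    (hA : betaP (b + r) c ∈ C.mem) (hB : betaP b (!c) ∈ C.mem) :
    betaP r c ∈ C.mem := by
  have hN : CPartition.mk 0 (b + b) (fun _ => (!c))
      (fun i => if (i : ℕ) < b then !(!c) else !c) ⊤ ∈ C.mem :=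
    nest_mem C hpib b le_rfl 0 (b + b) (by omega) (by omega)
  set N : CPartition := CPartition.mk 0 (b + b) (fun _ => (!c))
      (fun i => if (i : ℕ) < b then !(!c) else !c) ⊤ with hNdef
  have hMID : tensor (piP r c) N ∈ C.mem := C.tensor_mem _ _ hpir hN
  have h1 : (piP r c).l = (tensor (piP r c) N).k := by show r = r + 0; omega
  have hP : vcomp (piP r c) (tensor (piP r c) N) h1 ∈ C.mem := by
    refine C.vcomp_mem _ _ h1 hpir hMID ?_
    intro j
    show c = Sum.elim (piP r c).uc N.uc (finSumFinEquiv.symm (Fin.cast h1 j))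
    rw [elim_fse]
    split_ifs with h
    · rfl
    · exact ((⟨(Fin.cast h1 j : ℕ) - (piP r c).k, by
        have h5 : ((Fin.cast h1 j : ℕ)) < r + 0 := (Fin.cast h1 j).isLt
        have h6 : ¬ (Fin.cast h1 j : ℕ) < r := h
        show _ - r < 0; omega⟩ : Fin N.k)).elim0
  have hQ : tensor (betaP (b + r) c) (betaP b (!c)) ∈ C.mem :=
    C.tensor_mem _ _ hA hB
  have h2 : (vcomp (piP r c) (tensor (piP r c) N) h1).l
      = (tensor (betaP (b + r) c) (betaP b (!c))).k := by
    show r + (b + b) = (b + r) + b; omega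
  have hT : vcomp (vcomp (piP r c) (tensor (piP r c) N) h1)
      (tensor (betaP (b + r) c) (betaP b (!c))) h2 ∈ C.mem := by
    refine C.vcomp_mem _ _ h2 hP hQ ?_
    intro j
    show Sum.elim (piP r c).lc N.lc (finSumFinEquiv.symm j)
      = Sum.elim (betaP (b + r) c).uc (betaP b (!c)).uc
          (finSumFinEquiv.symm (Fin.cast h2 j))
    erw [elim_fse, elim_fse]
    have d1 : (piP r c).l = r := rfl
    have d2 : (betaP (b + r) c).k = b + r := rfl
    have d3 : ((Fin.cast h2 j : Fin ((betaP (b + r) c).k + (betaP b (!c)).k)) : ℕ)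
        = (j : ℕ) := rfl
    have d4 : (j : ℕ) < r + (b + b) := j.isLt
    simp only [d1, d2, d3]
    split_ifs
    all_goals first
      | rfl
      | (exact Bool.not_not c)
      | (exfalso; omega)
      | (show (if (j : ℕ) - r < b then !!c else !c) = _
         split_ifs <;> first | exact Bool.not_not c | rfl | (exfalso; omega))
  exact master C hT (fun _ => rfl)
    (vcomp_one _ _ _ (vcomp_one _ _ _ (fun i i' => trivial)))
    (vcomp_noThru _ _ _ (tensor_noThru (betaP_noThru _ _) (betaP_noThru _ _)))

end SubLemma
section NegLemma

open CPartition

/-- Color reversal: `β_k (color c) ∈ C` implies `β_k (color !c) ∈ C`. -/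
lemma neg_lemma (C : PartitionCategory) (k : ℕ) (c : Bool) (hk : 1 ≤ k)
    (hpik : piP k (!c) ∈ C.mem) (hbk : betaP k c ∈ C.mem) :
    betaP k (!c) ∈ C.mem := by
  have hN : CPartition.mk 0 (k + k) (fun _ => (!c))
      (fun i => if (i : ℕ) < k then !(!c) else !c) ⊤ ∈ C.mem :=
    nest_mem C hpik k le_rfl 0 (k + k) (by omega) rfl
  set N : CPartition := CPartition.mk 0 (k + k) (fun _ => (!c))
      (fun i => if (i : ℕ) < k then !(!c) else !c) ⊤ with hNdef
  set B2 : CPartition := tensor (betaP k c) (piP k (!c)) with hB2def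
  have hB2 : B2 ∈ C.mem := C.tensor_mem _ _ hbk hpik
  -- facts about B2.rel
  have hg : ∀ (x y : Fin (k + k) ⊕ Fin (k + k)), B2.rel.r x y →
      Sum.elim (fun _ : Fin (k + k) => true) (fun j : Fin (k + k) => decide (k ≤ (j : ℕ))) x
        = Sum.elim (fun _ : Fin (k + k) => true)
            (fun j : Fin (k + k) => decide (k ≤ (j : ℕ))) y := by
    intro a b hab
    change Fin ((betaP k c).k + (piP k (!c)).k) ⊕ Fin ((betaP k c).l + (piP k (!c)).l) at a b
    have hab' := (tensor_rel_iff (betaP k c) (piP k (!c)) a b).mp hab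
    have hk2 : (betaP k c).l = k := rfl
    have hk3 : (betaP k c).k = k := rfl
    rcases a with m | j <;> rcases b with m' | j'
    · rfl
    · rcases hm : (@finSumFinEquiv ((betaP k c).k) ((piP k (!c)).k)).symm m with u | u <;>
        rcases hj : (@finSumFinEquiv ((betaP k c).l) ((piP k (!c)).l)).symm j' with v | v <;>
          simp only [Sum.map_inl, Sum.map_inr, hm, hj, ssc1, ssc2, ssc3, ssc4] at hab'
      · cases hab' with | inl h => cases h
      · cases hab'
      · cases hab'
      · have hge : (j' : ℕ) = k + (v : ℕ) := fse_symm_inr hj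
        exact (decide_eq_true (by omega : k ≤ (j' : ℕ))).symm
    · rcases hm : (@finSumFinEquiv ((betaP k c).l) ((piP k (!c)).l)).symm j with u | u <;>
        rcases hj : (@finSumFinEquiv ((betaP k c).k) ((piP k (!c)).k)).symm m' with v | v <;>
          simp only [Sum.map_inl, Sum.map_inr, hm, hj, ssc1, ssc2, ssc3, ssc4] at hab'
      · cases hab' with | inl h => cases h
      · cases hab'
      · cases hab'
      · have hge : (j : ℕ) = k + (u : ℕ) := fse_symm_inr hm
        exact decide_eq_true (by omega : k ≤ (j : ℕ))
    · rcases hm : (@finSumFinEquiv ((betaP k c).l) ((piP k (!c)).l)).symm j with u | u <;>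
        rcases hj : (@finSumFinEquiv ((betaP k c).l) ((piP k (!c)).l)).symm j' with v | v <;>
          simp only [Sum.map_inl, Sum.map_inr, hm, hj, ssc1, ssc2, ssc3, ssc4] at hab'
      · have h1 : (u : ℕ) = (j : ℕ) ∧ (j : ℕ) < k := fse_symm_inl hm
        have h2 : (v : ℕ) = (j' : ℕ) ∧ (j' : ℕ) < k := fse_symm_inl hj
        show decide (k ≤ (j : ℕ)) = decide (k ≤ (j' : ℕ))
        rw [decide_eq_false (by omega : ¬ k ≤ (j : ℕ)),
          decide_eq_false (by omega : ¬ k ≤ (j' : ℕ))]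
      · cases hab'
      · cases hab'
      · have h1 : (j : ℕ) = k + (u : ℕ) := fse_symm_inr hm
        have h2 : (j' : ℕ) = k + (v : ℕ) := fse_symm_inr hj
        show decide (k ≤ (j : ℕ)) = decide (k ≤ (j' : ℕ))
        rw [decide_eq_true (by omega : k ≤ (j : ℕ)),
          decide_eq_true (by omega : k ≤ (j' : ℕ))]
  have hlow : ∀ (j j' : Fin (k + k)), (j : ℕ) < k → (j' : ℕ) < k →
      B2.rel.r (Sum.inr j) (Sum.inr j') := by
    intro j j' h h'
    change Fin ((betaP k c).l + (piP k (!c)).l) at j j'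
    refine (tensor_rel_iff (betaP k c) (piP k (!c)) (Sum.inr j) (Sum.inr j')).mpr ?_
    simp only [Sum.map_inr, fse_symm_eq]
    rw [dif_pos (show (j : ℕ) < (betaP k c).l from h), dif_pos (show (j' : ℕ) < (betaP k c).l from h')]
    simp only [ssc3]
    exact Sum.LiftRel.inl (Sum.LiftRel.inr trivial)
  have hpithru : ∀ (j : Fin (k + k)), k ≤ (j : ℕ) →
      B2.rel.r (Sum.inr j) (Sum.inl j) := by
    intro j h
    refine (tensor_rel_iff (betaP k c) (piP k (!c)) (Sum.inr (Fin.cast rfl j)) (Sum.inl (Fin.cast rfl j))).mpr ?_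
    simp only [Sum.map_inr, Sum.map_inl, fse_symm_eq, Fin.coe_cast]
    erw [dif_neg (show ¬ ((j : ℕ) < (betaP k c).l) from not_lt.2 h)]
    simp only [ssc4, ssc2]
    exact Sum.LiftRel.inr trivial
  -- compose the cups with B2
  have h3 : N.l = B2.k := rfl
  have hD : vcomp N B2 h3 ∈ C.mem := by
    refine C.vcomp_mem _ _ h3 hN hB2 ?_
    intro j
    show (if ((j : ℕ)) < k then !(!c) else !c)
      = Sum.elim (betaP k c).uc (piP k (!c)).uc (finSumFinEquiv.symm (Fin.cast h3 j))
    rw [elim_fse]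
    have d2 : (betaP k c).k = k := rfl
    have d3 : ((Fin.cast h3 j : Fin ((betaP k c).k + (piP k (!c)).k)) : ℕ) = (j : ℕ) := rfl
    simp only [d2, d3]
    split_ifs
    · exact Bool.not_not c
    · rfl
  -- characterize the relation of the composite
  set ind : Fin 0 ⊕ Fin (k + k) → Bool :=
    Sum.elim (fun _ => true) (fun j => decide ((j : ℕ) < k)) with hinddef
  have hrelD : (vcomp N B2 h3).rel = Setoid.ker ind := by
    apply Setoid.ext
    intro x y
    change Fin N.k ⊕ Fin B2.l at x y
    constructor
    · intro hxy
      have hxy' := (vcomp_rel_iff N B2 h3 x y).mp hxy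
      have inv := eqvGen_invariant
        (f := fun x : Fin N.k ⊕ (Fin N.l ⊕ Fin B2.l) =>
          Sum.elim (fun _ => true) (Sum.elim (fun _ => true)
            (fun j : Fin (k + k) => decide (k ≤ (j : ℕ)))) x) ?_ _ _ hxy'
      · rcases x with i | j
        · exact i.elim0
        · rcases y with i' | j'
          · exact i'.elim0
          · show decide ((j : ℕ) < k) = decide ((j' : ℕ) < k)
            simp only [Sum.map_inr, Sum.elim_inr] at inv
            simp only [decide_eq_decide] at inv ⊢
            revert inv
            show (decide (k ≤ (j : ℕ)) = decide (k ≤ (j' : ℕ))) → _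
            simp only [decide_eq_decide]
            omega
      · rintro u v (⟨a, b, hab, rfl, rfl⟩ | ⟨a, b, hab, rfl, rfl⟩)
        · rcases a with i | i
          · exact i.elim0
          · rcases b with i' | i'
            · exact i'.elim0
            · rfl
        · have hgv := hg a b hab
          rcases a with m | j <;> rcases b with m' | j' <;> exact hgv
    · intro hxy
      rcases x with i | j
      · exact i.elim0
      · rcases y with i' | j'
        · exact i'.elim0
        · refine (vcomp_rel_iff N B2 h3 (Sum.inr j) (Sum.inr j')).mpr ?_
          have hxy' : decide ((j : ℕ) < k) = decide ((j' : ℕ) < k) := hxy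
          simp only [decide_eq_decide] at hxy'
          by_cases hc : (j : ℕ) < k
          · exact Relation.EqvGen.rel _ _
              (Or.inr ⟨Sum.inr j, Sum.inr j', hlow j j' hc (hxy'.1 hc), rfl, rfl⟩)
          · have hc' : ¬ ((j' : ℕ) < k) := fun h => hc (hxy'.2 h)
            refine Relation.EqvGen.trans _ _ _
              (Relation.EqvGen.trans _ _ _
                (Relation.EqvGen.rel _ _
                  (Or.inr ⟨Sum.inr j, Sum.inl j, hpithru j (by omega), rfl, rfl⟩))
                (Relation.EqvGen.rel _ _
                  (Or.inl ⟨Sum.inr j, Sum.inr j', trivial, rfl, rfl⟩)))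
              (Relation.EqvGen.symm _ _
                (Relation.EqvGen.rel _ _
                  (Or.inr ⟨Sum.inr j', Sum.inl j', hpithru j' (by omega), rfl, rfl⟩)))
  -- the composite in clean form
  set D2 : CPartition := CPartition.mk 0 (k + k) (fun _ => (!c))
      (fun j => if (j : ℕ) < k then c else !c) (Setoid.ker ind) with hD2def
  have hD2eq : vcomp N B2 h3 = D2 := by
    refine mk_eq rfl ?_ hrelD
    funext j
    change Fin ((betaP k c).l + (piP k (!c)).l) at j
    show Sum.elim (betaP k c).lc (piP k (!c)).lc (finSumFinEquiv.symm j) = _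
    rw [elim_fse]
    have d2 : (betaP k c).l = k := rfl
    simp only [d2]
    split_ifs
    · rfl
    · rfl
  have hD2 : D2 ∈ C.mem := by rwa [hD2eq] at hD
  have hE : reflect D2 ∈ C.mem := C.reflect_mem _ hD2
  -- rotate everything down, one step at a time
  have rot : ∀ j, j ≤ k → ∀ a b : ℕ, a + j = k + k → b = j →
      CPartition.mk a b (fun i => if (i : ℕ) + j < k then c else !c) (fun _ => (!c))
        (Setoid.ker (Sum.elim (fun i : Fin a => decide ((i : ℕ) + j < k))
          (fun _ : Fin b => true))) ∈ C.mem := by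
    intro j
    induction j with
    | zero =>
      intro _ a b ha hb
      have hka : k + k = a := by omega
      have hb0 : 0 = b := by omega
      have key : reflect D2 = CPartition.mk a b
          (fun i => if (i : ℕ) + 0 < k then c else !c) (fun _ => (!c))
          (Setoid.ker (Sum.elim (fun i : Fin a => decide ((i : ℕ) + 0 < k))
            (fun _ : Fin b => true))) := by
        refine mk_eq' hka hb0 ?_ (fun j => j.elim0) ?_
        · intro i
          show (if (i : ℕ) < k then c else !c)
            = (if ((Fin.cast hka i : Fin a) : ℕ) + 0 < k then c else !c)
          have hcc : ((Fin.cast hka i : Fin a) : ℕ) = (i : ℕ) := rfl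
          simp only [hcc]
          by_cases h : (i : ℕ) < k
          · rw [if_pos h, if_pos (by omega)]
          · rw [if_neg h, if_neg (by omega)]
        · have hpt : ∀ z : Fin (k + k) ⊕ Fin 0,
              ind (Sum.swap z)
                = Sum.elim (fun i : Fin a => decide ((i : ℕ) + 0 < k))
                    (fun _ : Fin b => true)
                    (Sum.map (Fin.cast hka) (Fin.cast hb0) z) := by
            rintro (i | i)
            · show decide ((i : ℕ) < k)
                = decide (((Fin.cast hka i : Fin a) : ℕ) + 0 < k)
              have hcc : ((Fin.cast hka i : Fin a) : ℕ) = (i : ℕ) := rfl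
              rw [hcc]
              simp only [decide_eq_decide]
              omega
            · exact i.elim0
          exact fun x y =>
            ⟨fun h => ((hpt x).symm.trans h).trans (hpt y),
             fun h => ((hpt x).trans h).trans (hpt y).symm⟩
      rwa [key] at hE
    | succ j ih =>
      intro hj a b ha hb
      have hP := ih (by omega) (a + 1) j (by omega) rfl
      have hmem := C.rotDown_mem _ hP a rfl
      have hjb : j + 1 = b := by omega
      have key : rotDown (CPartition.mk (a + 1) j
          (fun i => if (i : ℕ) + j < k then c else !c) (fun _ => (!c))
          (Setoid.ker (Sum.elim (fun i : Fin (a + 1) => decide ((i : ℕ) + j < k))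
            (fun _ : Fin j => true)))) a rfl
          = CPartition.mk a b (fun i => if (i : ℕ) + (j + 1) < k then c else !c)
            (fun _ => (!c))
            (Setoid.ker (Sum.elim (fun i : Fin a => decide ((i : ℕ) + (j + 1) < k))
              (fun _ : Fin b => true))) := by
        refine mk_eq' rfl hjb ?_ ?_ ?_
        · intro i
          show (if ((i : ℕ) + 1) + j < k then c else !c)
            = (if ((Fin.cast rfl i : Fin a) : ℕ) + (j + 1) < k then c else !c)
          have hcc : ((Fin.cast rfl i : Fin a) : ℕ) = (i : ℕ) := rfl
          simp only [hcc]
          by_cases h : (i : ℕ) + 1 + j < k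
          · rw [if_pos h, if_pos (by omega)]
          · rw [if_neg h, if_neg (by omega)]
        · intro jj
          induction jj using Fin.cases with
          | zero =>
            show (!(if 0 + j < k then c else !c)) = !c
            rw [if_pos (by omega)]
          | succ j' =>
            simp only [Fin.cases_succ]
        · have hpt : ∀ z : Fin a ⊕ Fin (j + 1),
              Sum.elim (fun i : Fin (a + 1) => decide ((i : ℕ) + j < k))
                  (fun _ : Fin j => true)
                (Sum.elim (fun i : Fin a =>
                    Sum.inl (Fin.cast (rfl : a + 1 = a + 1).symm i.succ))
                  (fun jj => Fin.cases
                    (Sum.inl (Fin.cast (rfl : a + 1 = a + 1).symm (0 : Fin (a + 1))))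
                    (fun j' => Sum.inr j') jj) z)
              = Sum.elim (fun i : Fin a => decide ((i : ℕ) + (j + 1) < k))
                  (fun _ : Fin b => true)
                  (Sum.map (Fin.cast (rfl : a = a)) (Fin.cast hjb) z) := by
            rintro (i | jj)
            · show decide (((i : ℕ) + 1) + j < k) = decide ((i : ℕ) + (j + 1) < k)
              simp only [decide_eq_decide]
              omega
            · induction jj using Fin.cases with
              | zero =>
                show decide (0 + j < k) = true
                simp only [decide_eq_true_eq]
                omega
              | succ j' => rfl
          exact fun x y =>
            ⟨fun h => ((hpt x).symm.trans h).trans (hpt y),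
             fun h => ((hpt x).trans h).trans (hpt y).symm⟩
      rwa [key] at hmem
  have hfin := rot k le_rfl k k (by omega) rfl
  have key : CPartition.mk k k (fun i => if (i : ℕ) + k < k then c else !c)
      (fun _ => (!c))
      (Setoid.ker (Sum.elim (fun i : Fin k => decide ((i : ℕ) + k < k))
        (fun _ : Fin k => true))) = betaP k (!c) := by
    refine mk_eq (funext fun i => if_neg (by omega)) rfl ?_
    apply Setoid.ext
    intro x y
    constructor
    · intro h'
      rcases x with i | i <;> rcases y with i' | i'
      · exact Sum.LiftRel.inl trivial
      · exfalso
        have h'' : decide ((i : ℕ) + k < k) = true := h'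
        simp only [decide_eq_true_eq] at h''
        omega
      · exfalso
        have h'' : true = decide ((i' : ℕ) + k < k) := h'
        rw [eq_comm] at h''
        simp only [decide_eq_true_eq] at h''
        omega
      · exact Sum.LiftRel.inr trivial
    · intro h'
      cases h' with
      | inl _ =>
        show decide _ = decide _
        simp only [decide_eq_decide]
        omega
      | inr _ => rfl
  rwa [key] at hfin

end NegLemma
/-- if `C` is a category of noncrossing colored partitions with
`I(C) = ℤ \ {0}` (i.e. `π_k ∈ C` for all `k ≠ 0`), then
`J(C) = {k ∈ ℤ : β_k ∈ C}` is an additive subgroup of `ℤ`, hence equals `nℤ`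
for some `n ≥ 0`. -/
theorem JC_is_subgroup (C : PartitionCategory)
    (hnc : ∀ p ∈ C.mem, p.NonCrossing)
    (hI : ∀ k : ℤ, k ≠ 0 → piZ k ∈ C.mem) :
    ∃ n : ℕ, {k : ℤ | betaZ k ∈ C.mem} = {k : ℤ | (n : ℤ) ∣ k} := by
  have hpi : ∀ m : ℕ, 1 ≤ m → ∀ c : Bool, piP m c ∈ C.mem := by
    intro m hm c
    cases c
    · have h := hI (-(m : ℤ)) (by omega)
      have h1 : ((-(m : ℤ))).natAbs = m := by simp
      have h2 : decide ((0 : ℤ) < -(m : ℤ)) = false := decide_eq_false (by omega)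
      unfold piZ at h; rw [h1, h2] at h; exact h
    · have h := hI ((m : ℤ)) (by omega)
      have h1 : (((m : ℤ))).natAbs = m := by simp
      have h2 : decide ((0 : ℤ) < (m : ℤ)) = true := decide_eq_true (by omega)
      unfold piZ at h; rw [h1, h2] at h; exact h
  have hzero : ∀ c, betaP 0 c ∈ C.mem := fun c => by
    rw [beta_zero c true]; exact zero_mem C
  have haddP : ∀ a b c, betaP a c ∈ C.mem → betaP b c ∈ C.mem →
      betaP (a + b) c ∈ C.mem := by
    intro a b c h1 h2
    rcases Nat.eq_zero_or_pos a with rfl | hapos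
    · rw [Nat.zero_add]; exact h2
    rcases Nat.eq_zero_or_pos b with rfl | hbpos
    · exact h1
    exact add_lemma C a b c (hpi _ (by omega) c) h1 h2
  have hnegP : ∀ a c, betaP a c ∈ C.mem → betaP a (!c) ∈ C.mem := by
    intro a c h
    rcases Nat.eq_zero_or_pos a with rfl | hapos
    · exact hzero _
    exact neg_lemma C a c hapos (hpi _ hapos (!c)) h
  have hsubP : ∀ r b c, betaP (b + r) c ∈ C.mem → betaP b (!c) ∈ C.mem →
      betaP r c ∈ C.mem := by
    intro r b c h1 h2
    rcases Nat.eq_zero_or_pos r with rfl | hrpos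
    · exact hzero _
    rcases Nat.eq_zero_or_pos b with rfl | hbpos
    · rwa [Nat.zero_add] at h1
    exact sub_lemma C r b c hrpos hbpos (hpi _ hrpos c) (hpi _ hbpos (!c)) h1 h2
  have mz : ∀ z : ℤ, 0 < z → (betaZ z ∈ C.mem ↔ betaP z.natAbs true ∈ C.mem) := by
    intro z hz; unfold betaZ; rw [decide_eq_true hz]
  have mz' : ∀ z : ℤ, z < 0 → (betaZ z ∈ C.mem ↔ betaP z.natAbs false ∈ C.mem) := by
    intro z hz; unfold betaZ; rw [decide_eq_false (by omega : ¬ (0 : ℤ) < z)]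
  have h0S : betaZ 0 ∈ C.mem := by
    unfold betaZ
    rw [decide_eq_false (by omega : ¬ (0 : ℤ) < 0)]
    exact hzero false
  have hnegS : ∀ z : ℤ, betaZ z ∈ C.mem → betaZ (-z) ∈ C.mem := by
    intro z hz
    rcases lt_trichotomy z 0 with h | h | h
    · rw [mz (-z) (by omega), show (-z).natAbs = z.natAbs from by simp]
      rw [mz' z h] at hz
      simpa using hnegP z.natAbs false hz
    · subst h; rw [neg_zero]; exact hz
    · rw [mz' (-z) (by omega), show (-z).natAbs = z.natAbs from by simp]
      rw [mz z h] at hz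
      simpa using hnegP z.natAbs true hz
  have haddS : ∀ y z : ℤ, betaZ y ∈ C.mem → betaZ z ∈ C.mem →
      betaZ (y + z) ∈ C.mem := by
    intro y z hy hz
    rcases lt_trichotomy y 0 with hy0 | rfl | hy0
    · rcases lt_trichotomy z 0 with hz0 | rfl | hz0
      · -- both negative
        rw [mz' _ (by omega), show (y + z).natAbs = y.natAbs + z.natAbs from by omega]
        exact haddP _ _ _ ((mz' y hy0).mp hy) ((mz' z hz0).mp hz)
      · rw [add_zero]; exact hy
      · -- y < 0 < z
        rcases lt_trichotomy (y + z) 0 with hs | hs | hs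
        · rw [mz' _ hs]
          refine hsubP (y + z).natAbs z.natAbs false ?_ ?_
          · have := (mz' y hy0).mp hy
            rwa [show y.natAbs = z.natAbs + (y + z).natAbs from by omega] at this
          · exact (mz z hz0).mp hz
        · rw [hs]; exact h0S
        · rw [mz _ hs]
          refine hsubP (y + z).natAbs y.natAbs true ?_ ?_
          · have := (mz z hz0).mp hz
            rwa [show z.natAbs = y.natAbs + (y + z).natAbs from by omega] at this
          · exact (mz' y hy0).mp hy
    · rw [zero_add]; exact hz
    · rcases lt_trichotomy z 0 with hz0 | rfl | hz0
      · -- z < 0 < y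
        rcases lt_trichotomy (y + z) 0 with hs | hs | hs
        · rw [mz' _ hs]
          refine hsubP (y + z).natAbs y.natAbs false ?_ ?_
          · have := (mz' z hz0).mp hz
            rwa [show z.natAbs = y.natAbs + (y + z).natAbs from by omega] at this
          · exact (mz y hy0).mp hy
        · rw [hs]; exact h0S
        · rw [mz _ hs]
          refine hsubP (y + z).natAbs z.natAbs true ?_ ?_
          · have := (mz y hy0).mp hy
            rwa [show y.natAbs = z.natAbs + (y + z).natAbs from by omega] at this
          · exact (mz' z hz0).mp hz
      · rw [add_zero]; exact hy
      · rw [mz _ (by omega), show (y + z).natAbs = y.natAbs + z.natAbs from by omega]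
        exact haddP _ _ _ ((mz y hy0).mp hy) ((mz z hz0).mp hz)
  set S : AddSubgroup ℤ :=
    { carrier := {k : ℤ | betaZ k ∈ C.mem}
      zero_mem' := h0S
      add_mem' := fun ha hb => haddS _ _ ha hb
      neg_mem' := fun ha => hnegS _ ha } with hSdef
  obtain ⟨g, hg⟩ := Int.subgroup_cyclic S
  refine ⟨g.natAbs, ?_⟩
  ext x
  simp only [Set.mem_setOf_eq]
  have hmemS : betaZ x ∈ C.mem ↔ x ∈ S := Iff.rfl
  rw [hmemS, hg, AddSubgroup.mem_closure_singleton, Int.natAbs_dvd]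
  constructor
  · rintro ⟨n, hn⟩
    exact ⟨n, by rw [← hn, smul_eq_mul, mul_comm]⟩
  · rintro ⟨n, hn⟩
    exact ⟨n, by rw [smul_eq_mul, mul_comm, ← hn]⟩
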